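/- Let μ ∈ ℂ \ ({0} ∪ {1/n : n ≥ 1}). Define the lower triangular matrix E_μ = (e_{nm}(μ)) by e_{nm}(μ) = 1/(n·∏_{k=m}^{n}(1 − 1/(μk))) for 1 ≤ m < n and e_{nm}(μ) = 0 otherwise, and the diagonal matrix D_μ with entries d_{nn}(μ) = 1/(1/n − μ). Then, as operators on ℂ^ℕ, (C − μI) ∘ (D_μ − μ^{−2} E_μ) = I and (D_μ − μ^{−2} E_μ) ∘ (C − μI) = I; i.e. (C − μI)⁻¹ = D_μ − (1/μ²) E_μ. -/

import Mathlib

/-- The Cesàro operator, 1-indexed. -/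
noncomputable def cesaro1 (x : ℕ → ℂ) (n : ℕ) : ℂ :=
  (∑ i ∈ Finset.Icc 1 n, x i) / (n : ℂ)

/-- The diagonal operator D_μ with entries d_{nn}(μ) = 1/(1/n − μ). -/
noncomputable def Dmu (μ : ℂ) (x : ℕ → ℂ) (n : ℕ) : ℂ :=
  (1 / (1 / (n : ℂ) - μ)) * x n

/-- The lower triangular operator E_μ with entries
e_{nm}(μ) = 1/(n·∏_{k=m}^{n}(1 − 1/(μk))) for 1 ≤ m < n. -/
noncomputable def Emu (μ : ℂ) (x : ℕ → ℂ) (n : ℕ) : ℂ :=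
  ∑ m ∈ Finset.Ico 1 n,
    (1 / ((n : ℂ) * ∏ k ∈ Finset.Icc m n, (1 - 1 / (μ * (k : ℂ))))) * x m

/-- The candidate resolvent R_μ = D_μ − (1/μ²)E_μ. -/
noncomputable def Rmu (μ : ℂ) (x : ℕ → ℂ) (n : ℕ) : ℂ :=
  Dmu μ x n - (1 / μ ^ 2) * Emu μ x n

lemma mu_ne {μ : ℂ} (hn : ∀ n : ℕ, 1 ≤ n → μ ≠ 1 / (n : ℂ)) (n : ℕ) (h1 : 1 ≤ n) :
    μ * (n : ℂ) - 1 ≠ 0 := by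
  have hnc : (n : ℂ) ≠ 0 := Nat.cast_ne_zero.mpr (by omega)
  intro h
  apply hn n h1
  field_simp
  linear_combination h

lemma fac_ne {μ : ℂ} (hn : ∀ n : ℕ, 1 ≤ n → μ ≠ 1 / (n : ℂ)) (k : ℕ) (hk : 1 ≤ k) :
    (1 : ℂ) - 1 / (μ * (k : ℂ)) ≠ 0 := by
  have hkc : (k : ℂ) ≠ 0 := Nat.cast_ne_zero.mpr (by omega)
  have hmk := mu_ne hn k hk
  rcases eq_or_ne μ 0 with h0 | h0
  · simp [h0]
  intro h
  apply hmk
  field_simp at h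
  linear_combination h

lemma prod_ne {μ : ℂ} (hn : ∀ n : ℕ, 1 ≤ n → μ ≠ 1 / (n : ℂ)) (m n : ℕ) (hm : 1 ≤ m) :
    (∏ k ∈ Finset.Icc m n, ((1 : ℂ) - 1 / (μ * (k : ℂ)))) ≠ 0 := by
  refine Finset.prod_ne_zero_iff.mpr fun k hk => fac_ne hn k ?_
  exact le_trans hm (Finset.mem_Icc.mp hk).1

lemma Erec {μ : ℂ} (h0 : μ ≠ 0) (hn : ∀ n : ℕ, 1 ≤ n → μ ≠ 1 / (n : ℂ))
    (x : ℕ → ℂ) (n : ℕ) (h1 : 1 ≤ n) :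
    (((n : ℂ) + 1) * μ - 1) * Emu μ x (n + 1) =
      μ * (n : ℂ) * Emu μ x n + μ ^ 2 * (n : ℂ) / (μ * (n : ℂ) - 1) * x n := by
  have hnc : (n : ℂ) ≠ 0 := Nat.cast_ne_zero.mpr (by omega)
  have hnc1 : (n : ℂ) + 1 ≠ 0 := Nat.cast_add_one_ne_zero n
  have hm1 := mu_ne hn n h1
  have hm2 : μ * ((n : ℂ) + 1) - 1 ≠ 0 := by
    have := mu_ne hn (n + 1) (by omega); push_cast at this; exact this
  have hf1 : (1 : ℂ) - 1 / (μ * ((n : ℂ) + 1)) ≠ 0 := by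
    have := fac_ne hn (n + 1) (by omega); push_cast at this; exact this
  have hfn : (1 : ℂ) - 1 / (μ * (n : ℂ)) ≠ 0 := fac_ne hn n h1
  have hsplit : Emu μ x (n + 1) =
      (∑ m ∈ Finset.Ico 1 n,
        (1 / (((n : ℂ) + 1) * ∏ k ∈ Finset.Icc m (n + 1), (1 - 1 / (μ * (k : ℂ))))) * x m)
      + (1 / (((n : ℂ) + 1) * ∏ k ∈ Finset.Icc n (n + 1), (1 - 1 / (μ * (k : ℂ))))) * x n := by
    rw [Emu, Finset.sum_Ico_succ_top h1]
    push_cast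
    rfl
  rw [hsplit, Emu, mul_add, Finset.mul_sum, Finset.mul_sum]
  congr 1
  · refine Finset.sum_congr rfl fun m hm => ?_
    obtain ⟨hm1', hm2'⟩ := Finset.mem_Ico.mp hm
    have hP := prod_ne hn m n hm1'
    rw [Finset.prod_Icc_succ_top (by omega : m ≤ n + 1)]
    push_cast
    generalize (∏ k ∈ Finset.Icc m n, (1 - 1 / (μ * (k:ℂ)))) = P at hP ⊢
    have hm2'' : ((n:ℂ) + 1) * μ - 1 ≠ 0 := by rwa [mul_comm] at hm2
    field_simp
  · rw [Finset.prod_Icc_succ_top (by omega : n ≤ n + 1), Finset.Icc_self,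
      Finset.prod_singleton]
    push_cast
    have hm1'' : (n:ℂ) * μ - 1 ≠ 0 := by rwa [mul_comm] at hm1
    have hm2'' : ((n:ℂ) + 1) * μ - 1 ≠ 0 := by rwa [mul_comm] at hm2
    field_simp

lemma step_alg (μ ν A B X Y : ℂ) (h0 : μ ≠ 0) (hz1 : 1 - μ*ν ≠ 0)
    (hz2 : 1 - μ*(ν+1) ≠ 0)
    (hB : B = (μ^2*ν/(1-μ*ν)*X - μ*ν*A)/(1-μ*(ν+1))) :
    ν*X + ν*μ*(ν/(1-μ*ν)*X - 1/μ^2*A) + ((ν+1)/(1-μ*(ν+1))*Y - 1/μ^2*B)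
      = (ν+1)*Y + (ν+1)*μ*((ν+1)/(1-μ*(ν+1))*Y - 1/μ^2*B) := by
  subst hB
  field_simp
  have hz1' : (1:ℂ) - ν * μ ≠ 0 := by rwa [mul_comm] at hz1
  field_simp
  ring

set_option maxHeartbeats 1000000 in
lemma sumR {μ : ℂ} (h0 : μ ≠ 0) (hn : ∀ n : ℕ, 1 ≤ n → μ ≠ 1 / (n : ℂ))
    (x : ℕ → ℂ) (n : ℕ) (h1 : 1 ≤ n) :
    ∑ i ∈ Finset.Icc 1 n, Rmu μ x i = (n : ℂ) * x n + (n : ℂ) * μ * Rmu μ x n := by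
  induction n, h1 using Nat.le_induction with
  | base =>
    have h1μ : μ * (1 : ℂ) - 1 ≠ 0 := by
      have := mu_ne hn 1 le_rfl; push_cast at this ⊢; exact this
    have h1μ' : (1 : ℂ) - μ ≠ 0 := fun h => h1μ (by linear_combination -h)
    simp only [Finset.Icc_self, Finset.sum_singleton, Rmu, Dmu, Emu, Nat.cast_one]
    simp only [Finset.Ico_self, Finset.sum_empty, mul_zero, sub_zero]
    field_simp
    ring
  | succ n hn' ih =>
    have hnc : (n : ℂ) ≠ 0 := Nat.cast_ne_zero.mpr (by omega)
    have hnc1 : (n : ℂ) + 1 ≠ 0 := Nat.cast_add_one_ne_zero n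
    have hm1 := mu_ne hn n hn'
    have hm2 : ((n : ℂ) + 1) * μ - 1 ≠ 0 := by
      have := mu_ne hn (n + 1) (by omega); push_cast at this
      intro h; exact this (by linear_combination h)
    have hz1 : (1 : ℂ) - μ * (n : ℂ) ≠ 0 := fun h => hm1 (by linear_combination -h)
    have hz2 : (1 : ℂ) - μ * ((n : ℂ) + 1) ≠ 0 := fun h => hm2 (by linear_combination -h)
    have hd1 : 1 / (n : ℂ) - μ ≠ 0 := by
      intro h; apply hz1; field_simp at h; linear_combination h
    have hd2 : 1 / ((n : ℂ) + 1) - μ ≠ 0 := by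
      intro h; apply hz2; field_simp at h; linear_combination h
    have e1 : (1 : ℂ) / (1 / (n : ℂ) - μ) = (n : ℂ) / (1 - μ * (n : ℂ)) := by
      rw [div_eq_div_iff hd1 hz1]; field_simp
    have e2 : (1 : ℂ) / (1 / ((n : ℂ) + 1) - μ) = ((n : ℂ) + 1) / (1 - μ * ((n : ℂ) + 1)) := by
      rw [div_eq_div_iff hd2 hz2]; field_simp
    have hB1 := Erec h0 hn x n hn'
    have hm1' : (n:ℂ) * μ - 1 ≠ 0 := by rwa [mul_comm] at hm1
    field_simp at hB1
    have hE2 : Emu μ x (n + 1) =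
        (μ ^ 2 * (n : ℂ) / (1 - μ * (n : ℂ)) * x n - μ * (n : ℂ) * Emu μ x n) /
          (1 - μ * ((n : ℂ) + 1)) := by
      rw [eq_div_iff hz2]
      field_simp
      linear_combination hB1
    rw [Finset.sum_Icc_succ_top (by omega : 1 ≤ n + 1), ih]
    simp only [Rmu, Dmu]
    push_cast
    rw [e1, e2]
    exact step_alg μ (n : ℂ) (Emu μ x n) (Emu μ x (n+1)) (x n) (x (n+1)) h0 hz1 hz2 hE2

set_option maxHeartbeats 1000000 in
lemma EC {μ : ℂ} (h0 : μ ≠ 0) (hn : ∀ n : ℕ, 1 ≤ n → μ ≠ 1 / (n : ℂ))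
    (x : ℕ → ℂ) (n : ℕ) :
    Emu μ (fun k => cesaro1 x k - μ * x k) (n + 1) =
      μ ^ 2 / (1 - μ * ((n : ℂ) + 1)) * ∑ j ∈ Finset.Icc 1 n, x j := by
  induction n with
  | zero => simp [Emu]
  | succ n ih =>
    have hnc1 : (n : ℂ) + 1 ≠ 0 := Nat.cast_add_one_ne_zero n
    have hm1 : μ * ((n : ℂ) + 1) - 1 ≠ 0 := by
      have := mu_ne hn (n + 1) (by omega); push_cast at this; exact this
    have hm2 : μ * ((n : ℂ) + 1 + 1) - 1 ≠ 0 := by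
      have := mu_ne hn (n + 2) (by omega); push_cast at this
      intro h; exact this (by linear_combination h)
    have hz1 : (1 : ℂ) - μ * ((n : ℂ) + 1) ≠ 0 := fun h => hm1 (by linear_combination -h)
    have hz2 : (1 : ℂ) - μ * ((n : ℂ) + 1 + 1) ≠ 0 := fun h => hm2 (by linear_combination -h)
    have hB1 := Erec h0 hn (fun k => cesaro1 x k - μ * x k) (n + 1) (by omega)
    push_cast at hB1
    rw [ih] at hB1
    simp only [cesaro1] at hB1
    rw [Finset.sum_Icc_succ_top (by omega : 1 ≤ n + 1)] at hB1
    push_cast at hB1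
    have hq1 : ((n:ℂ) + 1) * μ - 1 ≠ 0 := fun h => hm1 (by linear_combination h)
    have hq2 : (1:ℂ) - ((n:ℂ) + 1) * μ ≠ 0 := fun h => hz1 (by linear_combination h)
    field_simp at hB1
    rw [Finset.sum_Icc_succ_top (by omega : 1 ≤ n + 1)]
    push_cast
    simp only [cesaro1]
    have hfac : ((1:ℂ) - μ * ((n:ℂ)+1)) * ((μ * ((n:ℂ)+1) - 1) * ((n:ℂ)+1)) ≠ 0 :=
      mul_ne_zero hz1 (mul_ne_zero hm1 hnc1)
    apply mul_right_cancel₀ hfac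
    field_simp
    apply mul_left_cancel₀ (pow_ne_zero 2 hq2)
    linear_combination hB1

/-- (C − μI)⁻¹ = D_μ − (1/μ²)E_μ on ℂ^ℕ for μ ∉ {0} ∪ {1/n : n ≥ 1}. -/
theorem stmt14 (μ : ℂ) (h0 : μ ≠ 0) (hn : ∀ n : ℕ, 1 ≤ n → μ ≠ 1 / (n : ℂ)) :
    ∀ x : ℕ → ℂ, ∀ n : ℕ, 1 ≤ n →
      (cesaro1 (Rmu μ x) n - μ * Rmu μ x n = x n) ∧
        (Rmu μ (fun k => cesaro1 x k - μ * x k) n = x n) := by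
  intro x n h1
  have hnc : (n : ℂ) ≠ 0 := Nat.cast_ne_zero.mpr (by omega)
  constructor
  · rw [cesaro1, sumR h0 hn x n h1]
    field_simp
    ring
  · obtain ⟨m, rfl⟩ : ∃ m, n = m + 1 := ⟨n - 1, by omega⟩
    have hnc1 : (m : ℂ) + 1 ≠ 0 := Nat.cast_add_one_ne_zero m
    have hm1 : μ * ((m : ℂ) + 1) - 1 ≠ 0 := by
      have := mu_ne hn (m + 1) (by omega); push_cast at this; exact this
    have hz1 : (1 : ℂ) - μ * ((m : ℂ) + 1) ≠ 0 := fun h => hm1 (by linear_combination -h)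
    have hd1 : 1 / ((m : ℂ) + 1) - μ ≠ 0 := by
      intro h; apply hz1; field_simp at h; linear_combination h
    have e1 : (1 : ℂ) / (1 / ((m : ℂ) + 1) - μ) = ((m : ℂ) + 1) / (1 - μ * ((m : ℂ) + 1)) := by
      rw [div_eq_div_iff hd1 hz1]; field_simp
    rw [Rmu, Dmu, EC h0 hn x m]
    simp only [cesaro1]
    rw [Finset.sum_Icc_succ_top (by omega : 1 ≤ m + 1)]
    push_cast
    rw [e1]
    have hq : (1:ℂ) - ((m:ℂ) + 1) * μ ≠ 0 := fun h => hz1 (by linear_combination h)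
    field_simp
    ring
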